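/- Let I = {1,2}, J = {-1,-2}, so t = (t_1, t_2, t_{-1}, t_{-2}) with all coordinates nonzero, and fix q ∈ ℂ*. Let w_{m,n} be nowhere-vanishing functions of t satisfying, for all i ≠ j in {1,2,-1,-2} and all (m,n) ∈ ℤ², the w-equation T_i T_j(w_{m,n}) = (T_i(w_{m,n+1}) T_j(w_{m,n+1}) / w_{m+1,n+1}) · (t_i T_j(w_{m+1,n}) − t_j T_i(w_{m+1,n})) / (t_i T_j(w_{m,n+1}) − t_j T_i(w_{m,n+1})) (denominators assumed nonzero), together with the homogeneity relation T_1 T_2(w_{m,n}) = c_{m,n} T_{-1} T_{-2}(w_{m,n}) for nonzero constants c_{m,n}. Define f_{m,n} = T_1(w_{m,n})/T_{-1}(w_{m,n}) and g_{m,n} = T_1 T_{-1}(w_{m,n}) / T_{-1} T_{-2}(w_{m,n}). Then, wherever the denominators are nonzero, g_{m,n} / (T_1 T_2)^{-1}(g_{m+1,n+1}) = (c_{m+1,n}/c_{m+1,n+1}) · (f_{m+1,n} − t_1/t_{-1})(f_{m,n+1} − q c_{m,n+1} t_{-2}/t_2) / ((f_{m,n+1} − t_1/t_{-1})(f_{m+1,n}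 − q c_{m+1,n} t_{-2}/t_2)). -/

import Mathlib

set_option maxHeartbeats 1000000


/-- The `q`-shift operator on `t = (t_1, t_2, t_{-1}, t_{-2})`: `t_i ↦ q t_i` for
`i ∈ {1,2}`, `t_i ↦ q⁻¹ t_i` for `i ∈ {-1,-2}`, other coordinates unchanged.
Note `Tshift q⁻¹ 1 (Tshift q⁻¹ 2 t)` realizes the inverse shift `(T_1 T_2)⁻¹`. -/
noncomputable def Tshift (q : ℂ) (i : ℤ) (t : ℤ → ℂ) : ℤ → ℂ :=
  Function.update t i ((if 0 < i then q else q⁻¹) * t i)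

/-- The `w`-equation for the pair `(i,j)` at the lattice site `(m,n)` and point `t`. -/
def Weq (q : ℂ) (w : ℤ → ℤ → (ℤ → ℂ) → ℂ) (i j m n : ℤ) (t : ℤ → ℂ) : Prop :=
  w m n (Tshift q i (Tshift q j t))
    = w m (n + 1) (Tshift q i t) * w m (n + 1) (Tshift q j t) / w (m + 1) (n + 1) t
      * (t i * w (m + 1) n (Tshift q j t) - t j * w (m + 1) n (Tshift q i t))
      / (t i * w m (n + 1) (Tshift q j t) - t j * w m (n + 1) (Tshift q i t))

/-- `f_{m,n} = T_1(w_{m,n}) / T_{-1}(w_{m,n})`. -/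
noncomputable def fVar (q : ℂ) (w : ℤ → ℤ → (ℤ → ℂ) → ℂ) (m n : ℤ) (t : ℤ → ℂ) : ℂ :=
  w m n (Tshift q 1 t) / w m n (Tshift q (-1) t)

/-- `g_{m,n} = T_1 T_{-1}(w_{m,n}) / T_{-1} T_{-2}(w_{m,n})`. -/
noncomputable def gVar (q : ℂ) (w : ℤ → ℤ → (ℤ → ℂ) → ℂ) (m n : ℤ) (t : ℤ → ℂ) : ℂ :=
  w m n (Tshift q 1 (Tshift q (-1) t)) / w m n (Tshift q (-1) (Tshift q (-2) t))

lemma Tshift_apply (q : ℂ) (i : ℤ) (t : ℤ → ℂ) (l : ℤ) :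
    Tshift q i t l = if l = i then (if 0 < i then q else q⁻¹) * t i else t l := by
  simp [Tshift, Function.update_apply]

lemma Tshift_ne (q : ℂ) (hq : q ≠ 0) (i : ℤ) (t : ℤ → ℂ) (ht : ∀ l, t l ≠ 0) :
    ∀ l, Tshift q i t l ≠ 0 := by
  intro l
  rw [Tshift_apply]
  split_ifs with h h'
  · exact mul_ne_zero hq (ht i)
  · exact mul_ne_zero (inv_ne_zero hq) (ht i)
  · exact ht l

lemma ptP1 (q : ℂ) (hq : q ≠ 0) (t : ℤ → ℂ) :
    Tshift q 2 (Tshift q (-2) (Tshift q 1 (Tshift q (-1) (Tshift q⁻¹ 1 (Tshift q⁻¹ 2 t)))))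
      = Tshift q (-1) (Tshift q (-2) t) := by
  funext l; norm_num [Tshift_apply]; split_ifs <;> simp_all

lemma ptP2 (q : ℂ) (hq : q ≠ 0) (t : ℤ → ℂ) :
    Tshift q 2 (Tshift q 1 (Tshift q (-1) (Tshift q⁻¹ 1 (Tshift q⁻¹ 2 t))))
      = Tshift q (-1) t := by
  funext l; norm_num [Tshift_apply]; split_ifs <;> simp_all

lemma ptP3 (q : ℂ) (hq : q ≠ 0) (t : ℤ → ℂ) :
    Tshift q (-1) (Tshift q (-2) (Tshift q⁻¹ 2 t))
      = Tshift q (-2) (Tshift q 1 (Tshift q (-1) (Tshift q⁻¹ 1 (Tshift q⁻¹ 2 t)))) := by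
  funext l; norm_num [Tshift_apply]; split_ifs <;> simp_all

lemma ptP4 (q : ℂ) (hq : q ≠ 0) (t : ℤ → ℂ) :
    Tshift q 1 (Tshift q 2 (Tshift q⁻¹ 2 t)) = Tshift q 1 t := by
  funext l; norm_num [Tshift_apply]; split_ifs <;> simp_all

lemma ptP5 (q : ℂ) (hq : q ≠ 0) (t : ℤ → ℂ) :
    Tshift q 1 (Tshift q 2 (Tshift q⁻¹ 1 (Tshift q⁻¹ 2 t))) = t := by
  funext l; norm_num [Tshift_apply]; split_ifs <;> simp_all

lemma ptP6 (q : ℂ) (t : ℤ → ℂ) :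
    Tshift q 1 (Tshift q (-1) (Tshift q⁻¹ 1 (Tshift q⁻¹ 2 t))) 2 = q⁻¹ * t 2 := by
  norm_num [Tshift_apply]

lemma ptP7 (q : ℂ) (t : ℤ → ℂ) :
    Tshift q 1 (Tshift q (-1) (Tshift q⁻¹ 1 (Tshift q⁻¹ 2 t))) (-2) = t (-2) := by
  norm_num [Tshift_apply]

/-- second half of the birational time evolution `T = T_1 T_2` of the
similarity-reduced lattice `q`-UC hierarchy (`I = {1,2}`, `J = {-1,-2}`):
`g_{m,n} / (T_1T_2)⁻¹(g_{m+1,n+1}) = (c_{m+1,n}/c_{m+1,n+1})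
· (f_{m+1,n} − t_1/t_{-1})(f_{m,n+1} − q c_{m,n+1} t_{-2}/t_2)
/ ((f_{m,n+1} − t_1/t_{-1})(f_{m+1,n} − q c_{m+1,n} t_{-2}/t_2))`
wherever denominators are nonzero. -/
theorem qp6_g_evolution
    (q : ℂ) (hq : q ≠ 0)
    (w : ℤ → ℤ → (ℤ → ℂ) → ℂ)
    (hw : ∀ m n : ℤ, ∀ t : ℤ → ℂ, (∀ l, t l ≠ 0) → w m n t ≠ 0)
    (hden : ∀ i ∈ ({1, 2, -1, -2} : Finset ℤ), ∀ j ∈ ({1, 2, -1, -2} : Finset ℤ),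
      i ≠ j → ∀ m n : ℤ, ∀ t : ℤ → ℂ, (∀ l, t l ≠ 0) →
        t i * w m (n + 1) (Tshift q j t) - t j * w m (n + 1) (Tshift q i t) ≠ 0)
    (hweq : ∀ i ∈ ({1, 2, -1, -2} : Finset ℤ), ∀ j ∈ ({1, 2, -1, -2} : Finset ℤ),
      i ≠ j → ∀ m n : ℤ, ∀ t : ℤ → ℂ, (∀ l, t l ≠ 0) → Weq q w i j m n t)
    (c : ℤ → ℤ → ℂ) (hc : ∀ m n : ℤ, c m n ≠ 0)
    (hhom : ∀ m n : ℤ, ∀ t : ℤ → ℂ, (∀ l, t l ≠ 0) →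
      w m n (Tshift q 1 (Tshift q 2 t)) = c m n * w m n (Tshift q (-1) (Tshift q (-2) t)))
    (m n : ℤ) (t : ℤ → ℂ) (ht : ∀ l, t l ≠ 0)
    (h1 : gVar q w (m + 1) (n + 1) (Tshift q⁻¹ 1 (Tshift q⁻¹ 2 t)) ≠ 0)
    (h2 : fVar q w m (n + 1) t - t 1 / t (-1) ≠ 0)
    (h3 : fVar q w (m + 1) n t - q * c (m + 1) n * (t (-2) / t 2) ≠ 0) :
    gVar q w m n t / gVar q w (m + 1) (n + 1) (Tshift q⁻¹ 1 (Tshift q⁻¹ 2 t))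
      = c (m + 1) n / c (m + 1) (n + 1)
        * ((fVar q w (m + 1) n t - t 1 / t (-1))
            * (fVar q w m (n + 1) t - q * c m (n + 1) * (t (-2) / t 2)))
        / ((fVar q w m (n + 1) t - t 1 / t (-1))
            * (fVar q w (m + 1) n t - q * c (m + 1) n * (t (-2) / t 2))) := by
  have hq' : q⁻¹ ≠ 0 := inv_ne_zero hq
  clear h1
  simp only [gVar, fVar] at h2 h3 ⊢
  have hts : ∀ l, Tshift q⁻¹ 1 (Tshift q⁻¹ 2 t) l ≠ 0 :=
    Tshift_ne _ hq' _ _ (Tshift_ne _ hq' _ _ ht)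
  have htτ : ∀ l, Tshift q 1 (Tshift q (-1) (Tshift q⁻¹ 1 (Tshift q⁻¹ 2 t))) l ≠ 0 :=
    Tshift_ne _ hq _ _ (Tshift_ne _ hq _ _ hts)
  have hv1 : ∀ l, Tshift q⁻¹ 2 t l ≠ 0 := Tshift_ne _ hq' _ _ ht
  -- homogeneity consequences
  have H1 := hhom m (n + 1) (Tshift q⁻¹ 2 t) hv1
  rw [ptP4 q hq, ptP3 q hq] at H1
  have X1 : w m (n + 1)
      (Tshift q (-2) (Tshift q 1 (Tshift q (-1) (Tshift q⁻¹ 1 (Tshift q⁻¹ 2 t)))))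
      = w m (n + 1) (Tshift q 1 t) / c m (n + 1) := by
    rw [eq_div_iff (hc m (n + 1)), mul_comm]; exact H1.symm
  have H2 := hhom (m + 1) n (Tshift q⁻¹ 2 t) hv1
  rw [ptP4 q hq, ptP3 q hq] at H2
  have X2 : w (m + 1) n
      (Tshift q (-2) (Tshift q 1 (Tshift q (-1) (Tshift q⁻¹ 1 (Tshift q⁻¹ 2 t)))))
      = w (m + 1) n (Tshift q 1 t) / c (m + 1) n := by
    rw [eq_div_iff (hc (m + 1) n), mul_comm]; exact H2.symm
  have H3 := hhom (m + 1) (n + 1) (Tshift q⁻¹ 1 (Tshift q⁻¹ 2 t)) hts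
  rw [ptP5 q hq] at H3
  have X3 : w (m + 1) (n + 1) (Tshift q (-1) (Tshift q (-2) (Tshift q⁻¹ 1 (Tshift q⁻¹ 2 t))))
      = w (m + 1) (n + 1) t / c (m + 1) (n + 1) := by
    rw [eq_div_iff (hc (m + 1) (n + 1)), mul_comm]; exact H3.symm
  -- w-equations
  have E1 := hweq 1 (by decide) (-1) (by decide) (by decide) m n t ht
  unfold Weq at E1
  have E2 := hweq 2 (by decide) (-2) (by decide) (by decide) m n
    (Tshift q 1 (Tshift q (-1) (Tshift q⁻¹ 1 (Tshift q⁻¹ 2 t)))) htτ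
  unfold Weq at E2
  rw [ptP1 q hq, ptP2 q hq, X1, X2, ptP6, ptP7] at E2
  -- denominator nonvanishing
  have hnn : n - 1 + 1 = n := by ring
  have hA1 := hden 1 (by decide) (-1) (by decide) (by decide) m n t ht
  have hA2 := hden 1 (by decide) (-1) (by decide) (by decide) (m + 1) (n - 1) t ht
  rw [hnn] at hA2
  have hD1 := hden 2 (by decide) (-2) (by decide) (by decide) m n
    (Tshift q 1 (Tshift q (-1) (Tshift q⁻¹ 1 (Tshift q⁻¹ 2 t)))) htτ
  rw [X1, ptP2 q hq, ptP6, ptP7] at hD1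
  have hD2 := hden 2 (by decide) (-2) (by decide) (by decide) (m + 1) (n - 1)
    (Tshift q 1 (Tshift q (-1) (Tshift q⁻¹ 1 (Tshift q⁻¹ 2 t)))) htτ
  rw [hnn] at hD2
  rw [X2, ptP2 q hq, ptP6, ptP7] at hD2
  -- nonvanishing of w values
  have hU1 : w m (n + 1) (Tshift q 1 t) ≠ 0 := hw _ _ _ (Tshift_ne _ hq _ _ ht)
  have hV1 : w m (n + 1) (Tshift q (-1) t) ≠ 0 := hw _ _ _ (Tshift_ne _ hq _ _ ht)
  have hU2 : w (m + 1) n (Tshift q 1 t) ≠ 0 := hw _ _ _ (Tshift_ne _ hq _ _ ht)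
  have hV2 : w (m + 1) n (Tshift q (-1) t) ≠ 0 := hw _ _ _ (Tshift_ne _ hq _ _ ht)
  have hW : w (m + 1) (n + 1) t ≠ 0 := hw _ _ _ ht
  have hN : w (m + 1) (n + 1)
      (Tshift q 1 (Tshift q (-1) (Tshift q⁻¹ 1 (Tshift q⁻¹ 2 t)))) ≠ 0 := hw _ _ _ htτ
  have hc1 := hc m (n + 1)
  have hc2 := hc (m + 1) n
  have hc3 := hc (m + 1) (n + 1)
  have ht1 := ht 1
  have ht2 := ht 2
  have htm1 := ht (-1)
  have htm2 := ht (-2)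
  clear hw hden hweq hhom H1 H2 H3 hts htτ hv1 ht
  rw [E1, E2, X3]
  clear E1 E2 X1 X2 X3
  set a := t 1 with ha
  set b := t 2 with hb
  set x := t (-1) with hx
  set y := t (-2) with hy
  set U1 := w m (n + 1) (Tshift q 1 t) with hU1d
  set V1 := w m (n + 1) (Tshift q (-1) t) with hV1d
  set U2 := w (m + 1) n (Tshift q 1 t) with hU2d
  set V2 := w (m + 1) n (Tshift q (-1) t) with hV2d
  set W := w (m + 1) (n + 1) t with hWd
  set N := w (m + 1) (n + 1)
    (Tshift q 1 (Tshift q (-1) (Tshift q⁻¹ 1 (Tshift q⁻¹ 2 t)))) with hNd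
  set c1 := c m (n + 1) with hc1d
  set c2 := c (m + 1) n with hc2d
  set c3 := c (m + 1) (n + 1) with hc3d
  clear ha hb hx hy hU1d hV1d hU2d hV2d hWd hNd hc1d hc2d hc3d h2 h3 hnn hq'
  have hK1 : x * U1 - a * V1 ≠ 0 := fun h => hA1 (by linear_combination -h)
  have hK2 : x * U2 - a * V2 ≠ 0 := fun h => hA2 (by linear_combination -h)
  have e1 : q⁻¹ * b * (U1 / c1) - y * V1 = (b * U1 - q * c1 * y * V1) / (q * c1) := by
    field_simp
  have e2 : q⁻¹ * b * (U2 / c2) - y * V2 = (b * U2 - q * c2 * y * V2) / (q * c2) := by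
    field_simp
  have hM1 : b * U1 - q * c1 * y * V1 ≠ 0 := by
    intro h; apply hD1; rw [e1, h, zero_div]
  have hM2 : b * U2 - q * c2 * y * V2 ≠ 0 := by
    intro h; apply hD2; rw [e2, h, zero_div]
  have e3 : U1 / V1 - a / x = (x * U1 - a * V1) / (x * V1) := by field_simp
  have e4 : U2 / V2 - a / x = (x * U2 - a * V2) / (x * V2) := by field_simp
  have e5 : U1 / V1 - q * c1 * (y / b) = (b * U1 - q * c1 * y * V1) / (b * V1) := by
    field_simp
  have e6 : U2 / V2 - q * c2 * (y / b) = (b * U2 - q * c2 * y * V2) / (b * V2) := by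
    field_simp
  have e7 : a * V1 - x * U1 = -(x * U1 - a * V1) := by ring
  have e8 : a * V2 - x * U2 = -(x * U2 - a * V2) := by ring
  rw [e1, e2, e3, e4, e5, e6, e7, e8]
  clear e1 e2 e3 e4 e5 e6 e7 e8 hA1 hA2 hD1 hD2
  generalize x * U1 - a * V1 = K1 at hK1 ⊢
  generalize x * U2 - a * V2 = K2 at hK2 ⊢
  generalize b * U1 - q * c1 * y * V1 = M1 at hM1 ⊢
  generalize b * U2 - q * c2 * y * V2 = M2 at hM2 ⊢
  field_simp
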